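/- For a two-layer neural network f(x) = M^{-1/2} Σ_m w_m ψ(v_m^T x) with smooth bounded activation ψ having bounded derivative, the operator norm of the Hessian of each output coordinate f_i with respect to the parameter vector θ is O(R/√M) uniformly over all θ with ||θ - θ_0|| ≤ R. -/

import Mathlib

open Finset

lemma cs_abs_sum {ι : Type*} (s : Finset ι) (f g : ι → ℝ) :
    ∑ j ∈ s, |f j| * |g j| ≤ Real.sqrt (∑ j ∈ s, (f j)^2) * Real.sqrt (∑ j ∈ s, (g j)^2) := by
  have h := Finset.sum_mul_sq_le_sq_mul_sq s (fun j => |f j|) (fun j => |g j|)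
  simp only [sq_abs] at h
  have h0 : 0 ≤ ∑ j ∈ s, |f j| * |g j| :=
    Finset.sum_nonneg fun j _ => mul_nonneg (abs_nonneg _) (abs_nonneg _)
  calc ∑ j ∈ s, |f j| * |g j| = Real.sqrt ((∑ j ∈ s, |f j| * |g j|)^2) := (Real.sqrt_sq h0).symm
    _ ≤ Real.sqrt ((∑ j ∈ s, (f j)^2) * ∑ j ∈ s, (g j)^2) := Real.sqrt_le_sqrt h
    _ = _ := Real.sqrt_mul (by positivity) _

section setup
variable (M d k : ℕ) (i : Fin k) (x : Fin d → ℝ) (ψ : ℝ → ℝ)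

abbrev Esp := EuclideanSpace ℝ ((Fin M × Fin k) ⊕ (Fin M × Fin d))

noncomputable def Wm (m : Fin M) : Esp M d k →L[ℝ] ℝ := EuclideanSpace.proj (Sum.inl (m, i))
noncomputable def Sm (m : Fin M) : Esp M d k →L[ℝ] ℝ :=
  ∑ a, x a • EuclideanSpace.proj (Sum.inr (m, a))

lemma Wm_apply (m : Fin M) (τ : Esp M d k) : Wm M d k i m τ = τ (Sum.inl (m, i)) := rfl

lemma Sm_apply (m : Fin M) (τ : Esp M d k) :
    Sm M d k x m τ = ∑ a, τ (Sum.inr (m, a)) * x a := by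
  simp [Sm, mul_comm]
end setup

section deriv
variable {M d k : ℕ} (i : Fin k) (x : Fin d → ℝ) {ψ : ℝ → ℝ}

local notation "W" => Wm M d k i
local notation "S" => Sm M d k x

/-- first derivative of one summand -/
lemma hD1m (hψ : Differentiable ℝ ψ) (m : Fin M) (τ : Esp M d k) :
    HasFDerivAt (fun σ : Esp M d k => W m σ * ψ (S m σ))
      ((W m τ * deriv ψ (S m τ)) • S m + ψ (S m τ) • W m) τ := by
  have h2 : HasFDerivAt (fun σ : Esp M d k => ψ (S m σ)) (deriv ψ (S m τ) • S m) τ :=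
    (hψ (S m τ)).hasDerivAt.comp_hasFDerivAt τ (S m).hasFDerivAt
  have := (W m).hasFDerivAt.mul h2
  rwa [smul_smul] at this

/-- derivative of `τ ↦ D1 τ v` (second derivative in direction pairs) -/
lemma hD2m (hψ : Differentiable ℝ ψ) (hψ' : Differentiable ℝ (deriv ψ))
    (m : Fin M) (v : Esp M d k) (θ : Esp M d k) :
    HasFDerivAt (fun τ : Esp M d k =>
        (W m τ * deriv ψ (S m τ)) * S m v + ψ (S m τ) * W m v)
      ((S m v) • ((W m θ * deriv (deriv ψ) (S m θ)) • S m + deriv ψ (S m θ) • W m)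
        + (W m v) • (deriv ψ (S m θ) • S m)) θ := by
  have h2 : HasFDerivAt (fun σ : Esp M d k => deriv ψ (S m σ))
      (deriv (deriv ψ) (S m θ) • S m) θ :=
    (hψ' (S m θ)).hasDerivAt.comp_hasFDerivAt θ (S m).hasFDerivAt
  have t1 := ((W m).hasFDerivAt.mul h2).mul_const (S m v)
  have h3 : HasFDerivAt (fun σ : Esp M d k => ψ (S m σ)) (deriv ψ (S m θ) • S m) θ :=
    (hψ (S m θ)).hasDerivAt.comp_hasFDerivAt θ (S m).hasFDerivAt
  have t2 := h3.mul_const (W m v)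
  have := t1.add t2
  rwa [smul_smul] at this
end deriv

section full
variable {M d k : ℕ} (i : Fin k) (x : Fin d → ℝ) {ψ : ℝ → ℝ}

local notation "W" => Wm M d k i
local notation "S" => Sm M d k x

noncomputable def Fnet (τ : Esp M d k) : ℝ :=
  (Real.sqrt M)⁻¹ * ∑ m, W m τ * ψ (S m τ)

noncomputable def D1 (τ : Esp M d k) : Esp M d k →L[ℝ] ℝ :=
  (Real.sqrt M)⁻¹ • ∑ m, ((W m τ * deriv ψ (S m τ)) • S m + ψ (S m τ) • W m)

lemma hD1 (hψ : Differentiable ℝ ψ) (τ : Esp M d k) :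
    HasFDerivAt (Fnet i x (ψ := ψ)) (D1 i x (ψ := ψ) τ) τ :=
  (HasFDerivAt.fun_sum (fun m _ => hD1m i x hψ m τ)).const_mul _

lemma D1_apply (τ v : Esp M d k) :
    D1 i x (ψ := ψ) τ v = (Real.sqrt M)⁻¹ *
      ∑ m, ((W m τ * deriv ψ (S m τ)) * S m v + ψ (S m τ) * W m v) := by
  simp [D1, ContinuousLinearMap.sum_apply, mul_comm]

noncomputable def D2 (θ v : Esp M d k) : Esp M d k →L[ℝ] ℝ :=
  (Real.sqrt M)⁻¹ • ∑ m,
    ((S m v) • ((W m θ * deriv (deriv ψ) (S m θ)) • S m + deriv ψ (S m θ) • W m)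
      + (W m v) • (deriv ψ (S m θ) • S m))

lemma hD2 (hψ : Differentiable ℝ ψ) (hψ' : Differentiable ℝ (deriv ψ))
    (θ v : Esp M d k) :
    HasFDerivAt (fun τ => D1 i x (ψ := ψ) τ v) (D2 i x (ψ := ψ) θ v) θ := by
  have h := (HasFDerivAt.fun_sum (fun m (_ : m ∈ univ) => hD2m i x hψ hψ' m v θ)).const_mul
    ((Real.sqrt M)⁻¹)
  have heq : (fun τ => D1 i x (ψ := ψ) τ v) = (fun τ : Esp M d k => (Real.sqrt M)⁻¹ *
      ∑ m, ((W m τ * deriv ψ (S m τ)) * S m v + ψ (S m τ) * W m v)) := by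
    funext τ; exact D1_apply i x τ v
  rw [heq]
  exact h

lemma hFc (hψ : ContDiff ℝ 2 ψ) : ContDiff ℝ 2 (Fnet (M := M) i x (ψ := ψ)) := by
  apply ContDiff.mul contDiff_const
  apply ContDiff.sum
  intro m _
  exact ((W m).contDiff).mul (hψ.comp (S m).contDiff)

lemma D2_apply (θ v u : Esp M d k) :
    D2 i x (ψ := ψ) θ v u = (Real.sqrt M)⁻¹ *
      ∑ m, (S m v * (W m θ * deriv (deriv ψ) (S m θ) * S m u + deriv ψ (S m θ) * W m u)
        + W m v * (deriv ψ (S m θ) * S m u)) := by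
  simp only [D2, ContinuousLinearMap.smul_apply, ContinuousLinearMap.sum_apply,
    ContinuousLinearMap.add_apply, smul_eq_mul]

end full

section bounds
variable {M d k : ℕ} (i : Fin k) (x : Fin d → ℝ)

local notation "W" => Wm M d k i
local notation "S" => Sm M d k x

lemma normsq (u : Esp M d k) : ∑ j, (u j)^2 = ‖u‖^2 := by
  rw [EuclideanSpace.norm_eq, Real.sq_sqrt (by positivity)]
  simp [Real.norm_eq_abs, sq_abs]

lemma sumW_sq (u : Esp M d k) : ∑ m, (W m u)^2 ≤ ‖u‖^2 := by
  rw [← normsq]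
  calc ∑ m, (W m u)^2 ≤ ∑ m, ∑ j : Fin k, (u (Sum.inl (m, j)))^2 :=
        Finset.sum_le_sum fun m _ =>
          Finset.single_le_sum (f := fun j => (u (Sum.inl (m, j)))^2)
            (fun _ _ => sq_nonneg _) (Finset.mem_univ i)
    _ = ∑ p : Fin M × Fin k, (u (Sum.inl p))^2 :=
        (Fintype.sum_prod_type (f := fun p : Fin M × Fin k => (u (Sum.inl p))^2)).symm
    _ ≤ _ := by
        rw [Fintype.sum_sum_type]
        exact le_add_of_nonneg_right (by positivity)

lemma sumS_sq {Bx : ℝ} (hx : ∀ a, |x a| ≤ Bx) (u : Esp M d k) :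
    ∑ m, (S m u)^2 ≤ (d * Bx^2) * ‖u‖^2 := by
  have hxs : ∑ a, (x a)^2 ≤ d * Bx^2 := by
    calc ∑ a, (x a)^2 ≤ ∑ _a : Fin d, Bx^2 :=
          Finset.sum_le_sum fun a _ => by
            have := hx a; nlinarith [abs_nonneg (x a), sq_abs (x a)]
      _ = d * Bx^2 := by simp [mul_comm]
  have step : ∀ m, (S m u)^2 ≤ (d * Bx^2) * ∑ a, (u (Sum.inr (m, a)))^2 := by
    intro m
    rw [Sm_apply]
    have h := Finset.sum_mul_sq_le_sq_mul_sq Finset.univ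
      (fun a => u (Sum.inr (m, a))) x
    have hnn : (0:ℝ) ≤ ∑ a, (u (Sum.inr (m, a)))^2 := by positivity
    nlinarith [h, mul_le_mul_of_nonneg_left hxs hnn]
  calc ∑ m, (S m u)^2 ≤ ∑ m, (d * Bx^2) * ∑ a, (u (Sum.inr (m, a)))^2 :=
        Finset.sum_le_sum fun m _ => step m
    _ = (d * Bx^2) * ∑ p : Fin M × Fin d, (u (Sum.inr p))^2 := by
        rw [← Finset.mul_sum,
          (Fintype.sum_prod_type (f := fun p : Fin M × Fin d => (u (Sum.inr p))^2)).symm]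
    _ ≤ (d * Bx^2) * ‖u‖^2 := by
        apply mul_le_mul_of_nonneg_left _ (by positivity)
        rw [← normsq, Fintype.sum_sum_type]
        exact le_add_of_nonneg_left (by positivity)

lemma absW_le (u : Esp M d k) (m : Fin M) : |W m u| ≤ ‖u‖ := by
  have h1 : (W m u)^2 ≤ ‖u‖^2 := by
    refine le_trans ?_ (sumW_sq i u)
    exact Finset.single_le_sum (f := fun m => (W m u)^2) (fun _ _ => sq_nonneg _)
      (Finset.mem_univ m)
  nlinarith [h1, sq_abs (W m u), abs_nonneg (W m u), norm_nonneg u]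
end bounds


/-- Hessian bound for a two-layer network `f_i(θ) = M^{-1/2} ∑_m w_{m,i} ψ(v_mᵀ x)`
with smooth bounded activation: the operator norm of the Hessian in the parameters `θ`
is `O(R/√M)` uniformly over the ball `‖θ - θ₀‖ ≤ R` (with `‖θ₀‖ ≤ R`, `R ≥ 1`). -/
theorem stmt12 (ψ : ℝ → ℝ) (B Bx : ℝ) (hψ : ContDiff ℝ 2 ψ)
    (hψ0 : ∀ t, |ψ t| ≤ B) (hψ1 : ∀ t, |deriv ψ t| ≤ B)
    (hψ2 : ∀ t, |deriv (deriv ψ) t| ≤ B) (d k : ℕ) :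
    ∃ C : ℝ, 0 < C ∧ ∀ (M : ℕ), 0 < M →
      ∀ (x : Fin d → ℝ), (∀ a, |x a| ≤ Bx) →
      ∀ (i : Fin k) (θ₀ : EuclideanSpace ℝ ((Fin M × Fin k) ⊕ (Fin M × Fin d)))
        (R : ℝ), 1 ≤ R → ‖θ₀‖ ≤ R →
      ∀ θ : EuclideanSpace ℝ ((Fin M × Fin k) ⊕ (Fin M × Fin d)), ‖θ - θ₀‖ ≤ R →
        ‖iteratedFDeriv ℝ 2
            (fun τ : EuclideanSpace ℝ ((Fin M × Fin k) ⊕ (Fin M × Fin d)) =>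
              (Real.sqrt M)⁻¹ *
                ∑ m : Fin M, τ (Sum.inl (m, i)) * ψ (∑ a : Fin d, τ (Sum.inr (m, a)) * x a))
            θ‖
          ≤ C * R / Real.sqrt M := by
  have hB0 : 0 ≤ B := (abs_nonneg _).trans (hψ0 0)
  set Q : ℝ := (d : ℝ) * Bx ^ 2 with hQdef
  have hQ : 0 ≤ Q := by positivity
  have hsQ : 0 ≤ Real.sqrt Q := Real.sqrt_nonneg _
  refine ⟨2 * B * Q + 2 * B * Real.sqrt Q + 1, by nlinarith, ?_⟩
  intro M hM x hx i θ₀ R hR hθ₀ θ hθ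
  have hψd : Differentiable ℝ ψ := hψ.differentiable (by norm_num)
  have hψ2' : ContDiff ℝ (1 + 1) ψ := by
    have : ((1 : WithTop ℕ∞) + 1) = 2 := by norm_num
    rw [this]; exact hψ
  have hψ'd : Differentiable ℝ (deriv ψ) :=
    ((contDiff_succ_iff_deriv.mp hψ2').2.2).differentiable (by norm_num)
  have hc : (0:ℝ) ≤ (Real.sqrt M)⁻¹ := by positivity
  have hθn : ‖θ‖ ≤ 2 * R := by
    have h1 : ‖θ‖ ≤ ‖θ - θ₀‖ + ‖θ₀‖ := by
      simpa using norm_add_le (θ - θ₀) θ₀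
    linarith
  have hfun : (fun τ : EuclideanSpace ℝ ((Fin M × Fin k) ⊕ (Fin M × Fin d)) =>
        (Real.sqrt M)⁻¹ *
          ∑ m : Fin M, τ (Sum.inl (m, i)) * ψ (∑ a : Fin d, τ (Sum.inr (m, a)) * x a))
      = Fnet (M := M) i x (ψ := ψ) := by
    funext τ
    simp only [Fnet, Wm_apply, Sm_apply]
  have hFd : fderiv ℝ (Fnet (M := M) i x (ψ := ψ)) = D1 i x (ψ := ψ) :=
    funext fun τ => (hD1 i x hψd τ).fderiv
  have hF2 : ContDiff ℝ 2 (Fnet (M := M) i x (ψ := ψ)) := hFc i x hψ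
  have hFdd : DifferentiableAt ℝ (fderiv ℝ (Fnet (M := M) i x (ψ := ψ))) θ :=
    ((hF2.fderiv_right (m := 1) (by norm_num)).differentiable (by norm_num)) θ
  have key : ∀ u v : Esp M d k,
      fderiv ℝ (fderiv ℝ (Fnet (M := M) i x (ψ := ψ))) θ u v
        = D2 i x (ψ := ψ) θ v u := by
    intro u v
    have h1 : fderiv ℝ (fun τ => fderiv ℝ (Fnet (M := M) i x (ψ := ψ)) τ v) θ
        = (fderiv ℝ (fderiv ℝ (Fnet (M := M) i x (ψ := ψ))) θ).flip v := by
      rw [fderiv_clm_apply hFdd (differentiableAt_const v)]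
      simp
    have h2 : (fun τ => fderiv ℝ (Fnet (M := M) i x (ψ := ψ)) τ v)
        = fun τ => D1 i x (ψ := ψ) τ v := by rw [hFd]
    have h3 : fderiv ℝ (fun τ => D1 i x (ψ := ψ) τ v) θ = D2 i x (ψ := ψ) θ v :=
      (hD2 i x hψd hψ'd θ v).fderiv
    have h4 : (fderiv ℝ (fderiv ℝ (Fnet (M := M) i x (ψ := ψ))) θ).flip v
        = D2 i x (ψ := ψ) θ v := by rw [← h1, h2, h3]
    calc fderiv ℝ (fderiv ℝ (Fnet (M := M) i x (ψ := ψ))) θ u v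
        = (fderiv ℝ (fderiv ℝ (Fnet (M := M) i x (ψ := ψ))) θ).flip v u := rfl
      _ = D2 i x (ψ := ψ) θ v u := by rw [h4]
  -- main estimate on |D2 θ v u|
  have main : ∀ u v : Esp M d k, |D2 i x (ψ := ψ) θ v u|
      ≤ (2 * B * Q + 2 * B * Real.sqrt Q + 1) * R / Real.sqrt M * (‖u‖ * ‖v‖) := by
    intro u v
    have hWθ : ∀ m : Fin M, |Wm M d k i m θ| ≤ 2 * R := fun m =>
      (absW_le i θ m).trans hθn
    -- per-term bound
    have hTm : ∀ m : Fin M,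
        |Sm M d k x m v * (Wm M d k i m θ * deriv (deriv ψ) (Sm M d k x m θ)
            * Sm M d k x m u + deriv ψ (Sm M d k x m θ) * Wm M d k i m u)
          + Wm M d k i m v * (deriv ψ (Sm M d k x m θ) * Sm M d k x m u)|
        ≤ 2 * R * B * (|Sm M d k x m u| * |Sm M d k x m v|)
          + B * (|Wm M d k i m u| * |Sm M d k x m v|)
          + B * (|Wm M d k i m v| * |Sm M d k x m u|) := by
      intro m
      set su := Sm M d k x m u
      set sv := Sm M d k x m v
      set wu := Wm M d k i m u
      set wv := Wm M d k i m v
      set wθ := Wm M d k i m θ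
      set a1 := deriv ψ (Sm M d k x m θ)
      set a2 := deriv (deriv ψ) (Sm M d k x m θ)
      have ha1 : |a1| ≤ B := hψ1 _
      have ha2 : |a2| ≤ B := hψ2 _
      have hwθ : |wθ| ≤ 2 * R := hWθ m
      calc |sv * (wθ * a2 * su + a1 * wu) + wv * (a1 * su)|
          ≤ |sv * (wθ * a2 * su + a1 * wu)| + |wv * (a1 * su)| := abs_add_le _ _
        _ ≤ |sv| * (|wθ| * |a2| * |su| + |a1| * |wu|) + |wv| * (|a1| * |su|) := by
            have e1 : |sv * (wθ * a2 * su + a1 * wu)|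
                ≤ |sv| * (|wθ| * |a2| * |su| + |a1| * |wu|) := by
              rw [abs_mul]
              refine mul_le_mul_of_nonneg_left ?_ (abs_nonneg _)
              refine (abs_add_le _ _).trans (le_of_eq ?_)
              rw [abs_mul, abs_mul, abs_mul]
            have e2 : |wv * (a1 * su)| = |wv| * (|a1| * |su|) := by
              rw [abs_mul, abs_mul]
            exact add_le_add e1 (le_of_eq e2)
        _ ≤ |sv| * (2 * R * B * |su| + B * |wu|) + |wv| * (B * |su|) := by
            have t1 : |wθ| * |a2| * |su| ≤ 2 * R * B * |su| :=
              mul_le_mul_of_nonneg_right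
                (mul_le_mul hwθ ha2 (abs_nonneg _) (by linarith)) (abs_nonneg _)
            have t2 : |a1| * |wu| ≤ B * |wu| :=
              mul_le_mul_of_nonneg_right ha1 (abs_nonneg _)
            have t3 : |a1| * |su| ≤ B * |su| :=
              mul_le_mul_of_nonneg_right ha1 (abs_nonneg _)
            exact add_le_add
              (mul_le_mul_of_nonneg_left (by linarith) (abs_nonneg _))
              (mul_le_mul_of_nonneg_left t3 (abs_nonneg _))
        _ = 2 * R * B * (|su| * |sv|) + B * (|wu| * |sv|) + B * (|wv| * |su|) := by ring
    -- Cauchy–Schwarz sums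
    have hSS : ∑ m, |Sm M d k x m u| * |Sm M d k x m v| ≤ Q * (‖u‖ * ‖v‖) := by
      calc ∑ m, |Sm M d k x m u| * |Sm M d k x m v|
          ≤ Real.sqrt (∑ m, (Sm M d k x m u)^2) * Real.sqrt (∑ m, (Sm M d k x m v)^2) :=
            cs_abs_sum _ _ _
        _ ≤ Real.sqrt (Q * ‖u‖^2) * Real.sqrt (Q * ‖v‖^2) := by
            gcongr <;> [exact sumS_sq x hx u; exact sumS_sq x hx v]
        _ = Q * (‖u‖ * ‖v‖) := by
            rw [Real.sqrt_mul hQ, Real.sqrt_mul hQ, Real.sqrt_sq (norm_nonneg _),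
              Real.sqrt_sq (norm_nonneg _)]
            rw [show Real.sqrt Q * ‖u‖ * (Real.sqrt Q * ‖v‖)
              = (Real.sqrt Q * Real.sqrt Q) * (‖u‖ * ‖v‖) by ring, Real.mul_self_sqrt hQ]
    have hWS : ∑ m, |Wm M d k i m u| * |Sm M d k x m v|
        ≤ Real.sqrt Q * (‖u‖ * ‖v‖) := by
      calc ∑ m, |Wm M d k i m u| * |Sm M d k x m v|
          ≤ Real.sqrt (∑ m, (Wm M d k i m u)^2) * Real.sqrt (∑ m, (Sm M d k x m v)^2) :=
            cs_abs_sum _ _ _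
        _ ≤ Real.sqrt (‖u‖^2) * Real.sqrt (Q * ‖v‖^2) := by
            gcongr <;> [exact sumW_sq i u; exact sumS_sq x hx v]
        _ = Real.sqrt Q * (‖u‖ * ‖v‖) := by
            rw [Real.sqrt_sq (norm_nonneg _), Real.sqrt_mul hQ,
              Real.sqrt_sq (norm_nonneg _)]
            ring
    have hWS' : ∑ m, |Wm M d k i m v| * |Sm M d k x m u|
        ≤ Real.sqrt Q * (‖u‖ * ‖v‖) := by
      calc ∑ m, |Wm M d k i m v| * |Sm M d k x m u|
          ≤ Real.sqrt (∑ m, (Wm M d k i m v)^2) * Real.sqrt (∑ m, (Sm M d k x m u)^2) :=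
            cs_abs_sum _ _ _
        _ ≤ Real.sqrt (‖v‖^2) * Real.sqrt (Q * ‖u‖^2) := by
            gcongr <;> [exact sumW_sq i v; exact sumS_sq x hx u]
        _ = Real.sqrt Q * (‖u‖ * ‖v‖) := by
            rw [Real.sqrt_sq (norm_nonneg _), Real.sqrt_mul hQ,
              Real.sqrt_sq (norm_nonneg _)]
            ring
    have hsum : ∑ m, (2 * R * B * (|Sm M d k x m u| * |Sm M d k x m v|)
          + B * (|Wm M d k i m u| * |Sm M d k x m v|)
          + B * (|Wm M d k i m v| * |Sm M d k x m u|))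
        = 2 * R * B * (∑ m, |Sm M d k x m u| * |Sm M d k x m v|)
          + B * (∑ m, |Wm M d k i m u| * |Sm M d k x m v|)
          + B * (∑ m, |Wm M d k i m v| * |Sm M d k x m u|) := by
      rw [Finset.mul_sum, Finset.mul_sum, Finset.mul_sum, ← Finset.sum_add_distrib,
        ← Finset.sum_add_distrib]
    rw [D2_apply, abs_mul, abs_of_nonneg hc]
    have habs : |∑ m, (Sm M d k x m v * (Wm M d k i m θ * deriv (deriv ψ) (Sm M d k x m θ)
            * Sm M d k x m u + deriv ψ (Sm M d k x m θ) * Wm M d k i m u)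
          + Wm M d k i m v * (deriv ψ (Sm M d k x m θ) * Sm M d k x m u))|
        ≤ 2 * R * B * (Q * (‖u‖ * ‖v‖)) + B * (Real.sqrt Q * (‖u‖ * ‖v‖))
          + B * (Real.sqrt Q * (‖u‖ * ‖v‖)) := by
      calc |∑ m, _| ≤ ∑ m, |Sm M d k x m v * (Wm M d k i m θ * deriv (deriv ψ) (Sm M d k x m θ)
            * Sm M d k x m u + deriv ψ (Sm M d k x m θ) * Wm M d k i m u)
          + Wm M d k i m v * (deriv ψ (Sm M d k x m θ) * Sm M d k x m u)| :=
            Finset.abs_sum_le_sum_abs _ _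
        _ ≤ ∑ m, (2 * R * B * (|Sm M d k x m u| * |Sm M d k x m v|)
            + B * (|Wm M d k i m u| * |Sm M d k x m v|)
            + B * (|Wm M d k i m v| * |Sm M d k x m u|)) :=
            Finset.sum_le_sum fun m _ => hTm m
        _ = _ := hsum
        _ ≤ 2 * R * B * (Q * (‖u‖ * ‖v‖)) + B * (Real.sqrt Q * (‖u‖ * ‖v‖))
            + B * (Real.sqrt Q * (‖u‖ * ‖v‖)) := by
            gcongr
    have hfin : 2 * R * B * (Q * (‖u‖ * ‖v‖)) + B * (Real.sqrt Q * (‖u‖ * ‖v‖))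
          + B * (Real.sqrt Q * (‖u‖ * ‖v‖))
        ≤ (2 * B * Q + 2 * B * Real.sqrt Q + 1) * R * (‖u‖ * ‖v‖) := by
      have hN : 0 ≤ ‖u‖ * ‖v‖ := by positivity
      nlinarith [mul_nonneg (mul_nonneg hB0 hsQ) hN, mul_nonneg (mul_nonneg hB0 hQ) hN,
        mul_nonneg hN (sub_nonneg.mpr hR)]
    calc (Real.sqrt M)⁻¹ * |∑ m, _| ≤ (Real.sqrt M)⁻¹
          * ((2 * B * Q + 2 * B * Real.sqrt Q + 1) * R * (‖u‖ * ‖v‖)) := by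
          exact mul_le_mul_of_nonneg_left (habs.trans hfin) hc
      _ = (2 * B * Q + 2 * B * Real.sqrt Q + 1) * R / Real.sqrt M * (‖u‖ * ‖v‖) := by
          rw [div_eq_mul_inv]
          ring
  -- conclude
  rw [hfun]
  refine ContinuousMultilinearMap.opNorm_le_bound (by positivity) ?_
  intro mm
  rw [iteratedFDeriv_two_apply, Fin.prod_univ_two, Real.norm_eq_abs, key (mm 0) (mm 1)]
  exact main (mm 0) (mm 1)
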